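/- Every graph G with at least one edge contains a subgraph G' with vertex connectivity κ(G') ≥ d(G)/2, where d(G) = e(G)/|V(G)| is the density of G. -/

import Mathlib

open SimpleGraph Finset

/-- `G` is `k`-connected: more than `k` vertices, and deleting any set of fewer
than `k` vertices leaves a connected graph. -/
def KConnected {V : Type*} (G : SimpleGraph V) (k : ℕ) : Prop :=
  k < Nat.card V ∧ ∀ X : Set V, X.ncard < k → (G.induce Xᶜ).Connected

/-- The vertex connectivity `κ(G)`. -/
noncomputable def vertexConn {V : Type*} (G : SimpleGraph V) : ℕ :=
  sSup {k | KConnected G k}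

lemma connected_induce_of' {W : Type*} (Γ : SimpleGraph W) (t : Set W)
    (hne : t.Nonempty)
    (h : ∀ a ∈ t, ∀ b ∈ t, Relation.ReflTransGen (fun x y => x ∈ t ∧ y ∈ t ∧ Γ.Adj x y) a b) :
    (Γ.induce t).Connected := by
  rw [connected_iff]
  refine ⟨?_, ⟨⟨hne.choose, hne.choose_spec⟩⟩⟩
  rintro ⟨a, ha⟩ ⟨b, hb⟩
  have H : ∀ c, Relation.ReflTransGen (fun x y => x ∈ t ∧ y ∈ t ∧ Γ.Adj x y) a c →
      ∀ hc : c ∈ t, (Γ.induce t).Reachable ⟨a, ha⟩ ⟨c, hc⟩ := by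
    intro c hrtg
    induction hrtg with
    | refl => intro hc; rfl
    | tail _ step ih =>
      intro hc
      exact (ih step.1).trans (SimpleGraph.Adj.reachable (by exact step.2.2))
  exact H b (h a ha b hb) hb

section Mader
variable {V : Type*} [Fintype V] [DecidableEq V] (G : SimpleGraph V) [DecidableRel G.Adj]


def edgesIn (S : Finset V) : Finset (Sym2 V) :=
  G.edgeFinset.filter (fun e => ∀ v ∈ e, v ∈ S)

def degIn (S : Finset V) (v : V) : ℕ := (G.neighborFinset v ∩ S).card

lemma mem_edgesIn {S : Finset V} {e : Sym2 V} :
    e ∈ edgesIn G S ↔ e ∈ G.edgeSet ∧ ∀ v ∈ e, v ∈ S := by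
  simp [edgesIn]

lemma edgesIn_mono {A B : Finset V} (h : A ⊆ B) : edgesIn G A ⊆ edgesIn G B := by
  intro e he
  rw [mem_edgesIn] at he ⊢
  exact ⟨he.1, fun v hv => h (he.2 v hv)⟩

lemma card_edgesIn_erase (S : Finset V) (v : V) :
    (edgesIn G S).card ≤ (edgesIn G (S.erase v)).card + degIn G S v := by
  have hsub : edgesIn G S ⊆ edgesIn G (S.erase v) ∪
      (G.neighborFinset v ∩ S).image (fun w => s(v, w)) := by
    intro e he
    rw [mem_edgesIn] at he
    rw [Finset.mem_union]
    by_cases hv : v ∈ e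
    · right
      induction e with
      | _ x y =>
        rw [Sym2.mem_iff] at hv
        rw [Finset.mem_image]
        rcases hv with rfl | rfl
        · exact ⟨y, by simp [G.mem_edgeSet.mp he.1, he.2 y (Sym2.mem_mk_right _ _)]⟩
        · exact ⟨x, by
            refine ⟨by simp [(G.mem_edgeSet.mp he.1).symm,
              he.2 x (Sym2.mem_mk_left _ _)], ?_⟩
            exact Sym2.eq_swap⟩
    · left
      rw [mem_edgesIn]
      exact ⟨he.1, fun w hw => Finset.mem_erase.mpr ⟨fun h => hv (h ▸ hw), he.2 w hw⟩⟩
  calc (edgesIn G S).card ≤ _ := Finset.card_le_card hsub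
    _ ≤ (edgesIn G (S.erase v)).card + ((G.neighborFinset v ∩ S).image (fun w => s(v, w))).card :=
        Finset.card_union_le _ _
    _ ≤ _ := by exact Nat.add_le_add_left (Finset.card_image_le) _

lemma degIn_le (S : Finset V) (v : V) : degIn G S v ≤ (S.erase v).card := by
  apply Finset.card_le_card
  intro w hw
  rw [Finset.mem_inter, SimpleGraph.mem_neighborFinset] at hw
  exact Finset.mem_erase.mpr ⟨fun h => (h ▸ hw.1).ne rfl, hw.2⟩

lemma card_edgesIn_le_choose (S : Finset V) : (edgesIn G S).card ≤ S.card.choose 2 := by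
  obtain ⟨n, hn⟩ : ∃ n, S.card = n := ⟨_, rfl⟩
  induction n generalizing S with
  | zero =>
    rw [Finset.card_eq_zero] at hn
    subst hn
    have : edgesIn G ∅ = ∅ := by
      rw [Finset.eq_empty_iff_forall_notMem]
      intro e he
      rw [mem_edgesIn] at he
      induction e with
      | _ x y => exact absurd (he.2 x (Sym2.mem_mk_left _ _)) (Finset.notMem_empty x)
    simp [this]
  | succ n ih =>
    obtain ⟨v, hv⟩ := Finset.card_pos.mp (by rw [hn]; exact n.succ_pos)
    have hcard : (S.erase v).card = n := by
      rw [Finset.card_erase_of_mem hv, hn]; rfl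
    rw [hn]
    calc (edgesIn G S).card ≤ (edgesIn G (S.erase v)).card + degIn G S v :=
          card_edgesIn_erase G S v
      _ ≤ n.choose 2 + n := Nat.add_le_add (hcard ▸ ih _ hcard) (hcard ▸ degIn_le G S v)
      _ = (n+1).choose 2 := by
          rw [Nat.choose_succ_succ, Nat.choose_one_right, Nat.add_comm]

def Good (k : ℕ) (γ : ℝ) (S : Finset V) : Prop :=
  2*k ≤ S.card ∧ γ * ((S.card : ℝ) - k) < ((edgesIn G S).card : ℝ)

lemma claimA {k : ℕ} (hk : 1 ≤ k) {γ : ℝ} (hγ : 2*(k:ℝ) ≤ γ) {S : Finset V}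
    (hG : Good G k γ S) : 2*k < S.card := by
  rcases lt_or_eq_of_le hG.1 with h | h
  · exact h
  exfalso
  have hch : (2*k).choose 2 = k * (2*k - 1) := by
    rw [Nat.choose_two_right]
    rw [mul_assoc]
    exact Nat.mul_div_cancel_left _ two_pos
  have h1 : ((edgesIn G S).card : ℝ) ≤ (k : ℝ) * (2*k - 1) := by
    have := card_edgesIn_le_choose G S
    rw [← h, hch] at this
    have := (Nat.cast_le (α := ℝ)).mpr this
    push_cast [Nat.cast_sub (by omega : 1 ≤ 2*k)] at this
    linarith
  have h2 : γ * ((S.card : ℝ) - k) < ((edgesIn G S).card : ℝ) := hG.2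
  have h3 : ((S.card : ℝ)) = 2*k := by rw [← h]; push_cast; ring
  rw [h3] at h2
  have hk' : (1:ℝ) ≤ k := by exact_mod_cast hk
  nlinarith

lemma claimB {k : ℕ} (hk : 1 ≤ k) {γ : ℝ} (hγ : 2*(k:ℝ) ≤ γ) {S : Finset V}
    (hG : Good G k γ S) (hmin : ∀ T : Finset V, T.card < S.card → ¬ Good G k γ T)
    {v : V} (hv : v ∈ S) : γ < (degIn G S v : ℝ) := by
  by_contra hdeg
  push_neg at hdeg
  have hA := claimA G hk hγ hG
  apply hmin (S.erase v) (by rw [Finset.card_erase_of_mem hv]; omega)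
  constructor
  · rw [Finset.card_erase_of_mem hv]; omega
  · have h1 := card_edgesIn_erase G S v
    have h1' : ((edgesIn G S).card : ℝ) ≤ ((edgesIn G (S.erase v)).card : ℝ) + (degIn G S v : ℝ) := by
      exact_mod_cast h1
    have hc : ((S.erase v).card : ℝ) = (S.card : ℝ) - 1 := by
      rw [Finset.card_erase_of_mem hv]
      have : 1 ≤ S.card := by omega
      push_cast [Nat.cast_sub this]
      ring
    rw [hc]
    have := hG.2
    nlinarith [this]

theorem kconn_of_minimal {k : ℕ} (hk : 1 ≤ k) {γ : ℝ} (hγ : 2*(k:ℝ) ≤ γ)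
    {S : Finset V} (hG : Good G k γ S)
    (hmin : ∀ T : Finset V, T.card < S.card → ¬ Good G k γ T) :
    KConnected (G.induce (S : Set V)) (k+1) := by
  classical
  have hA2k := claimA G hk hγ hG
  have hγ0 : (0:ℝ) < γ := by
    have hk' : (1:ℝ) ≤ (k:ℝ) := by exact_mod_cast hk
    linarith
  have hcardS : Nat.card ↑(S : Set V) = S.card := by
    rw [Nat.card_coe_set_eq, Set.ncard_coe_finset]
  constructor
  · rw [hcardS]; omega
  intro X hX
  set X' : Finset V := (Set.toFinite X).toFinset.image Subtype.val with hX'def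
  have hX'card : X'.card ≤ k := by
    calc X'.card ≤ (Set.toFinite X).toFinset.card := Finset.card_image_le
      _ = X.ncard := (Set.ncard_eq_toFinset_card X (Set.toFinite X)).symm
      _ ≤ k := by omega
  have hmemX' : ∀ (v : ↑(S:Set V)), (v:V) ∈ X' ↔ v ∈ X := by
    intro v
    simp only [hX'def, Finset.mem_image, Set.Finite.mem_toFinset]
    constructor
    · rintro ⟨w, hw, hwv⟩
      have : w = v := Subtype.ext hwv
      rwa [← this]
    · intro hv; exact ⟨v, hv, rfl⟩
  set s' : Set V := {v | v ∈ S ∧ v ∉ X'} with hs'def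
  set RV : V → V → Prop := fun x y => x ∈ s' ∧ y ∈ s' ∧ G.Adj x y with hRVdef
  have hV : ∀ a ∈ s', ∀ b ∈ s', Relation.ReflTransGen RV a b := by
    by_contra hcon
    push_neg at hcon
    obtain ⟨a, ha', b, hb', hnab⟩ := hcon
    set Cs : Set V := {v | v ∈ s' ∧ Relation.ReflTransGen RV a v} with hCdef
    have haC : a ∈ Cs := ⟨ha', .refl⟩
    have hbC : b ∉ Cs := fun h => hnab h.2
    have hCs' : Cs ⊆ s' := fun v hv => hv.1
    have Ctail : ∀ u ∈ Cs, ∀ w, RV u w → w ∈ Cs := fun u hu w hw => ⟨hw.2.1, hu.2.tail hw⟩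
    set A : Finset V := S.filter (fun v => v ∈ Cs ∨ v ∈ X') with hAdef
    set B : Finset V := S.filter (fun v => v ∉ Cs) with hBdef
    have hAS : A ⊆ S := Finset.filter_subset _ _
    have hBS : B ⊆ S := Finset.filter_subset _ _
    have hUn : A ∪ B = S := by
      apply Finset.Subset.antisymm (Finset.union_subset hAS hBS)
      intro v hv
      by_cases hvC : v ∈ Cs
      · exact Finset.mem_union_left _ (Finset.mem_filter.mpr ⟨hv, Or.inl hvC⟩)
      · exact Finset.mem_union_right _ (Finset.mem_filter.mpr ⟨hv, hvC⟩)
    have hInt : A ∩ B ⊆ X' := by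
      intro v hv
      rw [Finset.mem_inter, Finset.mem_filter, Finset.mem_filter] at hv
      rcases hv.1.2 with h | h
      · exact absurd h hv.2.2
      · exact h
    have hcards : A.card + B.card ≤ S.card + k := by
      have h1 := Finset.card_union_add_card_inter A B
      have h2 : (A ∩ B).card ≤ k := le_trans (Finset.card_le_card hInt) hX'card
      rw [hUn] at h1
      omega
    have key : ∀ u w : V, u ∈ S → w ∈ S → G.Adj u w → u ∈ Cs → w ∈ A := by
      intro u w hu hw huw huC
      by_cases hwX : w ∈ X'
      · exact Finset.mem_filter.mpr ⟨hw, Or.inr hwX⟩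
      · have hws' : w ∈ s' := ⟨hw, hwX⟩
        exact Finset.mem_filter.mpr ⟨hw, Or.inl (Ctail u huC w ⟨hCs' huC, hws', huw⟩)⟩
    have hcover : edgesIn G S ⊆ edgesIn G A ∪ edgesIn G B := by
      intro e he
      rw [mem_edgesIn] at he
      induction e with
      | _ x y =>
        have hx : x ∈ S := he.2 x (Sym2.mem_mk_left _ _)
        have hy : y ∈ S := he.2 y (Sym2.mem_mk_right _ _)
        have hadj : G.Adj x y := G.mem_edgeSet.mp he.1
        have memo : ∀ T : Finset V, x ∈ T → y ∈ T → s(x,y) ∈ edgesIn G T := by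
          intro T hxT hyT
          rw [mem_edgesIn]
          refine ⟨he.1, ?_⟩
          intro v hv
          rw [Sym2.mem_iff] at hv
          rcases hv with rfl | rfl
          · exact hxT
          · exact hyT
        by_cases hxC : x ∈ Cs
        · exact Finset.mem_union_left _
            (memo A (Finset.mem_filter.mpr ⟨hx, Or.inl hxC⟩) (key x y hx hy hadj hxC))
        · by_cases hyC : y ∈ Cs
          · exact Finset.mem_union_left _
              (memo A (key y x hy hx hadj.symm hyC) (Finset.mem_filter.mpr ⟨hy, Or.inl hyC⟩))
          · exact Finset.mem_union_right _
              (memo B (Finset.mem_filter.mpr ⟨hx, hxC⟩) (Finset.mem_filter.mpr ⟨hy, hyC⟩))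
    have hcover' : (edgesIn G S).card ≤ (edgesIn G A).card + (edgesIn G B).card :=
      le_trans (Finset.card_le_card hcover) (Finset.card_union_le _ _)
    have hdega : γ < (degIn G S a : ℝ) := claimB G hk hγ hG hmin ha'.1
    have hdegb : γ < (degIn G S b : ℝ) := claimB G hk hγ hG hmin hb'.1
    have hself : ∀ v : V, v ∉ G.neighborFinset v ∩ S := by
      intro v hv
      rw [Finset.mem_inter, SimpleGraph.mem_neighborFinset] at hv
      exact G.irrefl hv.1
    have hnA : insert a (G.neighborFinset a ∩ S) ⊆ A := by
      intro w hw
      rw [Finset.mem_insert] at hw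
      rcases hw with rfl | hw
      · exact Finset.mem_filter.mpr ⟨ha'.1, Or.inl haC⟩
      · rw [Finset.mem_inter, SimpleGraph.mem_neighborFinset] at hw
        exact key a w ha'.1 hw.2 hw.1 haC
    have hAcard : degIn G S a + 1 ≤ A.card := by
      have hc : (insert a (G.neighborFinset a ∩ S)).card = degIn G S a + 1 := by
        rw [Finset.card_insert_of_notMem (hself a)]
        rfl
      rw [← hc]
      exact Finset.card_le_card hnA
    have hnB : insert b (G.neighborFinset b ∩ S) ⊆ B := by
      intro w hw
      rw [Finset.mem_insert] at hw
      rcases hw with rfl | hw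
      · exact Finset.mem_filter.mpr ⟨hb'.1, hbC⟩
      · rw [Finset.mem_inter, SimpleGraph.mem_neighborFinset] at hw
        refine Finset.mem_filter.mpr ⟨hw.2, ?_⟩
        intro hwC
        exact hbC (Ctail w hwC b ⟨hCs' hwC, hb', hw.1.symm⟩)
    have hBcard : degIn G S b + 1 ≤ B.card := by
      have hc : (insert b (G.neighborFinset b ∩ S)).card = degIn G S b + 1 := by
        rw [Finset.card_insert_of_notMem (hself b)]
        rfl
      rw [← hc]
      exact Finset.card_le_card hnB
    have hbA : b ∉ A := by
      rw [hAdef, Finset.mem_filter]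
      rintro ⟨-, h | h⟩
      · exact hbC h
      · exact hb'.2 h
    have haB : a ∉ B := by
      rw [hBdef, Finset.mem_filter]
      rintro ⟨-, h⟩
      exact h haC
    have hAlt : A.card < S.card :=
      Finset.card_lt_card ⟨hAS, fun hSA => hbA (hSA hb'.1)⟩
    have hBlt : B.card < S.card :=
      Finset.card_lt_card ⟨hBS, fun hSB => haB (hSB ha'.1)⟩
    have h2kA : 2*k ≤ A.card := by
      have h1 : ((degIn G S a : ℕ) : ℝ) + 1 ≤ (A.card : ℝ) := by exact_mod_cast hAcard
      have : (2*(k:ℝ)) ≤ (A.card : ℝ) := by linarith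
      exact_mod_cast this
    have h2kB : 2*k ≤ B.card := by
      have h1 : ((degIn G S b : ℕ) : ℝ) + 1 ≤ (B.card : ℝ) := by exact_mod_cast hBcard
      have : (2*(k:ℝ)) ≤ (B.card : ℝ) := by linarith
      exact_mod_cast this
    have hGA : ((edgesIn G A).card : ℝ) ≤ γ * ((A.card:ℝ) - k) := by
      have := hmin A hAlt
      rw [Good, not_and] at this
      exact not_lt.mp (this h2kA)
    have hGB : ((edgesIn G B).card : ℝ) ≤ γ * ((B.card:ℝ) - k) := by
      have := hmin B hBlt
      rw [Good, not_and] at this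
      exact not_lt.mp (this h2kB)
    have hsum : ((edgesIn G S).card : ℝ) ≤ γ*((A.card:ℝ)-k) + γ*((B.card:ℝ)-k) := by
      have h0 : ((edgesIn G S).card : ℝ) ≤ ((edgesIn G A).card : ℝ) + ((edgesIn G B).card : ℝ) := by
        exact_mod_cast hcover'
      linarith
    have hABr : ((A.card:ℝ)) + (B.card:ℝ) ≤ (S.card:ℝ) + k := by exact_mod_cast hcards
    have hmul : γ * (((A.card:ℝ)) + (B.card:ℝ) - 2*k) ≤ γ * ((S.card:ℝ) - k) :=
      mul_le_mul_of_nonneg_left (by linarith) hγ0.le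
    have := hG.2
    nlinarith [hsum, hmul, this]
  -- now derive connectivity
  have hne : (Xᶜ : Set ↑(S:Set V)).Nonempty := by
    by_contra h
    rw [Set.not_nonempty_iff_eq_empty, Set.compl_empty_iff] at h
    rw [h] at hX
    rw [Set.ncard_univ, hcardS] at hX
    omega
  apply connected_induce_of' _ _ hne
  intro p hp q hq
  have hps' : (p:V) ∈ s' := ⟨Finset.mem_coe.mp p.2, fun hc => hp ((hmemX' p).mp hc)⟩
  have hqs' : (q:V) ∈ s' := ⟨Finset.mem_coe.mp q.2, fun hc => hq ((hmemX' q).mp hc)⟩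
  have h := hV _ hps' _ hqs'
  have lift : ∀ c, Relation.ReflTransGen RV ↑p c → ∀ hcs : c ∈ s',
      Relation.ReflTransGen
        (fun x y => x ∈ Xᶜ ∧ y ∈ Xᶜ ∧ (G.induce (S:Set V)).Adj x y) p
        ⟨c, Finset.mem_coe.mpr hcs.1⟩ := by
    intro c hc
    induction hc with
    | refl => intro _; exact Relation.ReflTransGen.refl
    | tail _ step ih =>
      intro hcs
      refine (ih step.1).tail ?_
      refine ⟨?_, ?_, ?_⟩
      · intro hmem
        exact step.1.2 ((hmemX' _).mpr hmem)
      · intro hmem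
        exact step.2.1.2 ((hmemX' _).mpr hmem)
      · exact step.2.2
  exact lift _ h hqs'

end Mader

lemma two_mul_choose_two (n : ℕ) : 2 * n.choose 2 = n * (n-1) := by
  rcases n with _ | m
  · simp
  · rw [Nat.choose_two_right]
    have hdvd : 2 ∣ (m+1) * (m+1-1) := by
      simp only [Nat.add_sub_cancel]
      rw [mul_comm]
      exact (Nat.even_mul_succ_self m).two_dvd
    exact Nat.mul_div_cancel' hdvd

lemma bddAbove_kconn {W : Type*} (Γ : SimpleGraph W) : BddAbove {j | KConnected Γ j} :=
  ⟨Nat.card W, fun j hj => le_of_lt hj.1⟩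

lemma le_vertexConn {W : Type*} {Γ : SimpleGraph W} {j : ℕ} (h : KConnected Γ j) :
    j ≤ vertexConn Γ := le_csSup (bddAbove_kconn Γ) h

theorem stmt_9 {V : Type*} [Fintype V] (G : SimpleGraph V)
    (hE : G.edgeSet.Nonempty) :
    ∃ H : G.Subgraph, (G.edgeSet.ncard : ℝ) / (Fintype.card V : ℝ) / 2 ≤
      (vertexConn H.coe : ℝ) := by
  classical
  obtain ⟨e, he⟩ := hE
  have hxy : ∃ x y, G.Adj x y := by
    induction e with
    | _ x y => exact ⟨x, y, G.mem_edgeSet.mp he⟩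
  obtain ⟨x, y, hadj⟩ := hxy
  set n : ℕ := Fintype.card V with hn
  set m : ℕ := G.edgeSet.ncard with hm
  have hn1 : 1 ≤ n := Fintype.card_pos_iff.mpr ⟨x⟩
  have hm1 : 1 ≤ m := by
    have : G.edgeSet.Nonempty := ⟨_, he⟩
    have := Set.ncard_pos (Set.toFinite G.edgeSet) |>.mpr this
    omega
  set d : ℝ := (m : ℝ) / (n : ℝ) with hd
  have hd0 : 0 ≤ d := by positivity
  set k : ℕ := ⌊d / 2⌋₊ with hk
  rcases Nat.eq_zero_or_pos k with hk0 | hk1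
  · -- small density: a single edge suffices
    refine ⟨G.subgraphOfAdj hadj, ?_⟩
    have h1 : KConnected (G.subgraphOfAdj hadj).coe 1 := by
      constructor
      · have h2 : Nat.card ↑({x, y} : Set V) = 2 := by
          rw [Nat.card_coe_set_eq, Set.ncard_pair hadj.ne]
        show 1 < Nat.card ↑({x, y} : Set V)
        omega
      · intro X hX
        have hX0 : X = ∅ := by
          have h0 := (Set.ncard_eq_zero (Set.toFinite X)).mp (by omega)
          exact h0
        subst hX0
        apply connected_induce_of'
        · exact ⟨⟨x, by simp⟩, by simp⟩
        · intro p hp q hq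
          by_cases hpq : p = q
          · subst hpq; exact Relation.ReflTransGen.refl
          · refine Relation.ReflTransGen.single ⟨by simp, by simp, ?_⟩
            show (G.subgraphOfAdj hadj).Adj ↑p ↑q
            have hp2 : (p : V) = x ∨ (p : V) = y := p.2
            have hq2 : (q : V) = x ∨ (q : V) = y := q.2
            have hne' : (p : V) ≠ (q : V) := fun h => hpq (Subtype.ext h)
            rw [SimpleGraph.subgraphOfAdj_adj]
            rcases hp2 with hp2 | hp2 <;> rcases hq2 with hq2 | hq2 <;>
              simp_all [Sym2.eq_swap]
    have hκ : 1 ≤ vertexConn (G.subgraphOfAdj hadj).coe := le_vertexConn h1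
    have hdlt : d / 2 < 1 := by
      by_contra hc
      push_neg at hc
      have h3 : 1 ≤ ⌊d / 2⌋₊ := Nat.le_floor (by exact_mod_cast hc)
      rw [← hk] at h3
      omega
    have hκ' : (1:ℝ) ≤ (vertexConn (G.subgraphOfAdj hadj).coe : ℝ) := by exact_mod_cast hκ
    show d / 2 ≤ _
    linarith
  · -- main case : Mader's argument
    have hγ : 2 * (k : ℝ) ≤ d := by
      have := Nat.floor_le (by positivity : (0:ℝ) ≤ d / 2)
      rw [← hk] at this
      linarith
    have hd2 : 0 < d := by
      have hk' : (1:ℝ) ≤ (k:ℝ) := by exact_mod_cast hk1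
      linarith
    have hmn : (m : ℝ) = d * n := by
      rw [hd]
      field_simp
    have hedges_univ : edgesIn G (Finset.univ : Finset V) = G.edgeFinset := by
      apply Finset.Subset.antisymm
      · intro e' he'
        rw [mem_edgesIn] at he'
        exact SimpleGraph.mem_edgeFinset.mpr he'.1
      · intro e' he'
        rw [mem_edgesIn]
        exact ⟨SimpleGraph.mem_edgeFinset.mp he', fun v _ => Finset.mem_univ v⟩
    have hmcard : m = G.edgeFinset.card := by
      rw [hm, ← SimpleGraph.coe_edgeFinset, Set.ncard_coe_finset]
    have hchoose : (m : ℝ) ≤ (n : ℝ) * ((n : ℝ) - 1) / 2 := by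
      have h1 : m ≤ n.choose 2 := by
        rw [hmcard, ← hedges_univ]
        have := card_edgesIn_le_choose G (Finset.univ : Finset V)
        rwa [Finset.card_univ] at this
      have h2 : 2 * n.choose 2 = n * (n - 1) := two_mul_choose_two n
      have h3 : ((n * (n-1) : ℕ) : ℝ) = (n:ℝ) * ((n:ℝ) - 1) := by
        push_cast [Nat.cast_sub hn1]
        ring
      have h4 : (2:ℝ) * (n.choose 2 : ℝ) = (n:ℝ) * ((n:ℝ)-1) := by
        rw [← h3]
        exact_mod_cast h2
      have h5 : (m : ℝ) ≤ (n.choose 2 : ℝ) := by exact_mod_cast h1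
      linarith
    have hGood : Good G k d (Finset.univ : Finset V) := by
      constructor
      · -- 2k ≤ n
        rw [Finset.card_univ, ← hn]
        have h6 : 2 * (2*(k:ℝ)) * (n:ℝ) ≤ (n:ℝ) * ((n:ℝ) - 1) := by
          have h7 : (2*(k:ℝ)) * (n:ℝ) ≤ d * n := by
            apply mul_le_mul_of_nonneg_right hγ (by positivity)
          rw [← hmn] at h7
          linarith
        have h8 : 2*(k:ℝ) ≤ (n:ℝ) := by nlinarith [hn1, (by exact_mod_cast hn1 : (1:ℝ) ≤ (n:ℝ))]
        exact_mod_cast h8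
      · rw [Finset.card_univ, ← hn, hedges_univ, ← hmcard, hmn]
        have hk' : (1:ℝ) ≤ (k:ℝ) := by exact_mod_cast hk1
        nlinarith
    have hex : ∃ c : ℕ, ∃ S : Finset V, (Good G k d S ∧ S.card = c) :=
      ⟨_, Finset.univ, hGood, rfl⟩
    obtain ⟨S, hS, hSc⟩ := Nat.find_spec hex
    have hmin : ∀ T : Finset V, T.card < S.card → ¬ Good G k d T := by
      intro T hT hGT
      exact Nat.find_min hex (by omega) ⟨T, hGT, rfl⟩
    have hKC : KConnected (G.induce (S : Set V)) (k+1) :=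
      kconn_of_minimal G hk1 hγ hS hmin
    refine ⟨(⊤ : G.Subgraph).induce ↑S, ?_⟩
    have hcoe : ((⊤ : G.Subgraph).induce ↑S).coe = G.induce ((S : Set V)) := by
      ext a b
      exact ⟨fun h => h.2.2, fun h => ⟨a.2, b.2, h⟩⟩
    have hκ : k + 1 ≤ vertexConn ((⊤ : G.Subgraph).induce ↑S).coe := by
      apply le_vertexConn
      rw [hcoe]
      exact hKC
    have hlt : d / 2 < (k : ℝ) + 1 := Nat.lt_floor_add_one (d / 2)
    have : (m : ℝ) / (n : ℝ) / 2 = d / 2 := by rw [hd]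
    rw [this]
    have hκ' : ((k:ℝ) + 1) ≤ (vertexConn ((⊤ : G.Subgraph).induce ↑S).coe : ℝ) := by
      exact_mod_cast hκ
    linarith
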